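/- Let λ be a partition of n ≥ 10 with q := λ₁/n > 1/2. Then c_{λ'} − d_λ + e_λ ≤ 20·c_{λ'}², where c_{λ'} = Σ_{i≥j} λ'ᵢ(λ'ⱼ−1)/(n(n−1)), d_λ = Σ_{i≥j≥k, λₖ>2} λᵢ(λⱼ−1)(λₖ−2)/(n(n−1)(n−2)), and e_λ = Σ_{i≥j≥k≥l, λₗ>3} λᵢ(λⱼ−1)(λₖ−2)(λₗ−3)/(n(n−1)(n−2)(n−3)). -/

import Mathlib

open Finset

/-- `c_ν = Σ_{i≥j} ν_i (ν_j − 1) / (n(n−1))`, for the parts function `p` of a partition of `n`. -/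
noncomputable def cS (p : ℕ → ℕ) (n : ℕ) : ℝ :=
  ∑ i ∈ Finset.range n, ∑ j ∈ Finset.range (i + 1),
    (p i : ℝ) * ((p j : ℝ) - 1) / (n * ((n : ℝ) - 1))

/-- `d_ν = Σ_{i≥j≥k, ν_k>2} ν_i (ν_j − 1)(ν_k − 2) / (n(n−1)(n−2))`. -/
noncomputable def dS (p : ℕ → ℕ) (n : ℕ) : ℝ :=
  ∑ i ∈ Finset.range n, ∑ j ∈ Finset.range (i + 1),
    ∑ k ∈ (Finset.range (j + 1)).filter (fun k => 2 < p k),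
      (p i : ℝ) * ((p j : ℝ) - 1) * ((p k : ℝ) - 2) / (n * ((n : ℝ) - 1) * ((n : ℝ) - 2))

/-- `e_ν = Σ_{i≥j≥k≥l, ν_k>2, ν_l>3} ν_i (ν_j−1)(ν_k−2)(ν_l−3) / (n(n−1)(n−2)(n−3))`. -/
noncomputable def eS (p : ℕ → ℕ) (n : ℕ) : ℝ :=
  ∑ i ∈ Finset.range n, ∑ j ∈ Finset.range (i + 1),
    ∑ k ∈ (Finset.range (j + 1)).filter (fun k => 2 < p k),
      ∑ l ∈ (Finset.range (k + 1)).filter (fun l => 3 < p l),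
        (p i : ℝ) * ((p j : ℝ) - 1) * ((p k : ℝ) - 2) * ((p l : ℝ) - 3) /
          (n * ((n : ℝ) - 1) * ((n : ℝ) - 2) * ((n : ℝ) - 3))
/-- key lower bound for d - e, for an antitone parts function summing to n -/
private lemma aux_de {p : ℕ → ℕ} {n : ℕ}
    (hanti : ∀ x y : ℕ, x ≤ y → p y ≤ p x)
    (hsum : ∑ i ∈ Finset.range n, p i = n)
    (h10 : 10 ≤ n) (hm6 : 6 ≤ p 0) (hmn : p 0 ≤ n) :
    ((n : ℝ) - p 0) * ((p 0 : ℝ) - 1) * ((p 0 : ℝ) - 2) /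
      (((n:ℝ) - 1) * ((n:ℝ) - 2) * ((n:ℝ) - 3)) ≤ dS p n - eS p n := by
  have hN10 : (10:ℝ) ≤ (n:ℝ) := by exact_mod_cast h10
  set N : ℝ := (n : ℝ) with hN
  have hM6 : (6:ℝ) ≤ (p 0 : ℝ) := by exact_mod_cast hm6
  set M : ℝ := (p 0 : ℝ) with hM
  have hMN : M ≤ N := by rw [hM, hN]; exact_mod_cast hmn
  have hD3 : (0:ℝ) < N * (N - 1) * (N - 2) :=
    mul_pos (mul_pos (by linarith) (by linarith)) (by linarith)
  have hN3 : (0:ℝ) < N - 3 := by linarith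
  -- nonnegativity of triple products
  have hT3 : ∀ i j k : ℕ, j ≤ i → 2 < p k →
      0 ≤ (p i : ℝ) * ((p j : ℝ) - 1) * ((p k : ℝ) - 2) := by
    intro i j k hji hk
    rcases Nat.eq_zero_or_pos (p j) with hj | hj
    · have : p i = 0 := Nat.le_antisymm (hj ▸ hanti j i hji) (Nat.zero_le _)
      simp [this]
    · have h1 : (1:ℝ) ≤ (p j : ℝ) := by exact_mod_cast hj
      have h2 : (2:ℝ) ≤ (p k : ℝ) - 0 := by
        have : (3:ℝ) ≤ (p k : ℝ) := by exact_mod_cast hk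
        linarith
      have hpi : (0:ℝ) ≤ (p i : ℝ) := by positivity
      exact mul_nonneg (mul_nonneg hpi (by linarith)) (by linarith)
  -- the sum over F of (p l - 3) is between 0 and N - 3
  have hS : ∀ k : ℕ, k < n →
      0 ≤ ∑ l ∈ (Finset.range (k+1)).filter (fun l => 3 < p l), ((p l : ℝ) - 3) ∧
      ∑ l ∈ (Finset.range (k+1)).filter (fun l => 3 < p l), ((p l : ℝ) - 3) ≤ N - 3 := by
    intro k hk
    set F := (Finset.range (k+1)).filter (fun l => 3 < p l) with hF
    have hnn : ∀ l ∈ F, (0:ℝ) ≤ (p l : ℝ) - 3 := by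
      intro l hl
      have : 3 < p l := (Finset.mem_filter.mp hl).2
      have : (3:ℝ) ≤ (p l:ℝ) := by exact_mod_cast this.le
      linarith
    constructor
    · exact Finset.sum_nonneg hnn
    · rcases Finset.eq_empty_or_nonempty F with he | hne
      · rw [he]; simp; linarith
      · have hsub : F ⊆ Finset.range n := by
          intro l hl
          have := Finset.mem_range.mp (Finset.mem_filter.mp hl).1
          exact Finset.mem_range.mpr (by omega)
        have h1 : ∑ l ∈ F, (p l : ℝ) ≤ N := by
          rw [hN]
          rw [← hsum]
          push_cast
          exact Finset.sum_le_sum_of_subset_of_nonneg hsub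
            (fun l _ _ => (p l).cast_nonneg)
        have h2 : (1:ℝ) ≤ (F.card : ℝ) := by
          have := Finset.card_pos.mpr hne
          exact_mod_cast this
        rw [Finset.sum_sub_distrib, Finset.sum_const, nsmul_eq_mul]
        linarith
  have hNne : (N:ℝ) ≠ 0 := by linarith
  have hN1 : ((N:ℝ) - 1) ≠ 0 := by linarith
  have hN2 : ((N:ℝ) - 2) ≠ 0 := by linarith
  have hN3ne : ((N:ℝ) - 3) ≠ 0 := by linarith
  have hD4 : (0:ℝ) < N * (N - 1) * (N - 2) * (N - 3) := mul_pos hD3 hN3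
  have hT2 : ∀ i j : ℕ, j ≤ i → 0 ≤ (p i : ℝ) * ((p j : ℝ) - 1) := by
    intro i j hji
    rcases Nat.eq_zero_or_pos (p j) with hj | hj
    · have : p i = 0 := Nat.le_antisymm (hj ▸ hanti j i hji) (Nat.zero_le _)
      simp [this]
    · have h1 : (1:ℝ) ≤ (p j : ℝ) := by exact_mod_cast hj
      have hpi : (0:ℝ) ≤ (p i : ℝ) := by positivity
      nlinarith
  have hM2 : (0:ℝ) ≤ M - 2 := by linarith
  have hNM : (0:ℝ) ≤ N - M := by linarith
  -- rewrite dS - eS as a triple sum of differences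
  have hrw : dS p n - eS p n = ∑ i ∈ Finset.range n, ∑ j ∈ Finset.range (i+1),
      ∑ k ∈ (Finset.range (j+1)).filter (fun k => 2 < p k),
      ((p i : ℝ) * ((p j : ℝ) - 1) * ((p k : ℝ) - 2) / (N * (N - 1) * (N - 2)) -
        ∑ l ∈ (Finset.range (k+1)).filter (fun l => 3 < p l),
          (p i : ℝ) * ((p j : ℝ) - 1) * ((p k : ℝ) - 2) * ((p l : ℝ) - 3) /
            (N * (N - 1) * (N - 2) * (N - 3))) := by
    rw [dS, eS, ← Finset.sum_sub_distrib]
    refine Finset.sum_congr rfl fun i _ => ?_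
    rw [← Finset.sum_sub_distrib]
    refine Finset.sum_congr rfl fun j _ => ?_
    rw [← Finset.sum_sub_distrib]
  -- each difference term is nonnegative
  have hdiff : ∀ i j k : ℕ, j ≤ i → k < n → 2 < p k →
      0 ≤ (p i : ℝ) * ((p j : ℝ) - 1) * ((p k : ℝ) - 2) / (N * (N - 1) * (N - 2)) -
        ∑ l ∈ (Finset.range (k+1)).filter (fun l => 3 < p l),
          (p i : ℝ) * ((p j : ℝ) - 1) * ((p k : ℝ) - 2) * ((p l : ℝ) - 3) /
            (N * (N - 1) * (N - 2) * (N - 3)) := by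
    intro i j k hji hkn hk
    have hT3' := hT3 i j k hji hk
    obtain ⟨hS0, hS1⟩ := hS k hkn
    set T := (p i : ℝ) * ((p j : ℝ) - 1) * ((p k : ℝ) - 2) with hT
    set S := ∑ l ∈ (Finset.range (k+1)).filter (fun l => 3 < p l), ((p l : ℝ) - 3) with hSdef
    have hsum' : ∑ l ∈ (Finset.range (k+1)).filter (fun l => 3 < p l),
        T * ((p l : ℝ) - 3) / (N * (N - 1) * (N - 2) * (N - 3))
        = T * S / (N * (N - 1) * (N - 2) * (N - 3)) := by
      rw [← Finset.sum_div, ← Finset.mul_sum]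
    rw [hsum']
    have key : T * S / (N * (N - 1) * (N - 2) * (N - 3)) ≤ T / (N * (N - 1) * (N - 2)) := by
      rw [div_le_div_iff₀ hD4 hD3]
      calc T * S * (N * (N - 1) * (N - 2))
          ≤ T * (N - 3) * (N * (N - 1) * (N - 2)) := by
            apply mul_le_mul_of_nonneg_right _ hD3.le
            exact mul_le_mul_of_nonneg_left hS1 hT3'
        _ = T * (N * (N - 1) * (N - 2) * (N - 3)) := by ring
    linarith
  have hCnn : (0:ℝ) ≤ (M - 2) * (N - M) / (N * (N - 1) * (N - 2) * (N - 3)) :=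
    div_nonneg (mul_nonneg hM2 hNM) hD4.le
  have hk0 : ∀ i j : ℕ, j ≤ i → i < n →
      (p i : ℝ) * ((p j : ℝ) - 1) * ((M - 2) * (N - M) / (N * (N - 1) * (N - 2) * (N - 3))) ≤
      ∑ k ∈ (Finset.range (j+1)).filter (fun k => 2 < p k),
      ((p i : ℝ) * ((p j : ℝ) - 1) * ((p k : ℝ) - 2) / (N * (N - 1) * (N - 2)) -
        ∑ l ∈ (Finset.range (k+1)).filter (fun l => 3 < p l),
          (p i : ℝ) * ((p j : ℝ) - 1) * ((p k : ℝ) - 2) * ((p l : ℝ) - 3) /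
            (N * (N - 1) * (N - 2) * (N - 3))) := by
    intro i j hji hi
    have hmem : (0:ℕ) ∈ (Finset.range (j+1)).filter (fun k => 2 < p k) := by
      simp only [Finset.mem_filter, Finset.mem_range]
      exact ⟨Nat.succ_pos j, by omega⟩
    have hle := Finset.single_le_sum (f := fun k =>
      ((p i : ℝ) * ((p j : ℝ) - 1) * ((p k : ℝ) - 2) / (N * (N - 1) * (N - 2)) -
        ∑ l ∈ (Finset.range (k+1)).filter (fun l => 3 < p l),
          (p i : ℝ) * ((p j : ℝ) - 1) * ((p k : ℝ) - 2) * ((p l : ℝ) - 3) /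
            (N * (N - 1) * (N - 2) * (N - 3))))
      (fun k hk => by
        have h1 := (Finset.mem_filter.mp hk).2
        have h2 := Finset.mem_range.mp (Finset.mem_filter.mp hk).1
        exact hdiff i j k hji (by omega) h1) hmem
    refine le_trans (le_of_eq ?_) hle
    have hfil : (Finset.range (0+1)).filter (fun l => 3 < p l) = {0} := by
      have : (3:ℕ) < p 0 := by omega
      simp [Finset.range_one, Finset.filter_singleton, this]
    simp only [hfil, Finset.sum_singleton]
    field_simp
    ring
  have hSp : ∑ i ∈ Finset.range n, (p i : ℝ) = N := by
    rw [hN]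
    exact_mod_cast congrArg (Nat.cast (R := ℝ)) hsum
  calc (N - M) * (M - 1) * (M - 2) / ((N - 1) * (N - 2) * (N - 3))
      = N * ((M - 1) * ((M - 2) * (N - M) / (N * (N - 1) * (N - 2) * (N - 3)))) := by field_simp
    _ = ∑ i ∈ Finset.range n, (p i : ℝ) * ((M - 1) * ((M - 2) * (N - M) / (N * (N - 1) * (N - 2) * (N - 3)))) := by
        rw [← Finset.sum_mul, hSp]
    _ ≤ ∑ i ∈ Finset.range n, ∑ j ∈ Finset.range (i+1),
          (p i : ℝ) * ((p j : ℝ) - 1) * ((M - 2) * (N - M) / (N * (N - 1) * (N - 2) * (N - 3))) := by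
        apply Finset.sum_le_sum
        intro i hi
        have hmem0 : (0:ℕ) ∈ Finset.range (i+1) := Finset.mem_range.mpr (Nat.succ_pos i)
        have hle := Finset.single_le_sum (f := fun j =>
            (p i : ℝ) * ((p j : ℝ) - 1) * ((M - 2) * (N - M) / (N * (N - 1) * (N - 2) * (N - 3))))
          (fun j hj => mul_nonneg (hT2 i j (by
            have := Finset.mem_range.mp hj; omega)) hCnn) hmem0
        refine le_trans (le_of_eq ?_) hle
        rw [← hM]
        ring
    _ ≤ ∑ i ∈ Finset.range n, ∑ j ∈ Finset.range (i+1),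
        ∑ k ∈ (Finset.range (j+1)).filter (fun k => 2 < p k),
        ((p i : ℝ) * ((p j : ℝ) - 1) * ((p k : ℝ) - 2) / (N * (N - 1) * (N - 2)) -
          ∑ l ∈ (Finset.range (k+1)).filter (fun l => 3 < p l),
            (p i : ℝ) * ((p j : ℝ) - 1) * ((p k : ℝ) - 2) * ((p l : ℝ) - 3) /
              (N * (N - 1) * (N - 2) * (N - 3))) := by
        apply Finset.sum_le_sum
        intro i hi
        apply Finset.sum_le_sum
        intro j hj
        exact hk0 i j (by have := Finset.mem_range.mp hj; omega) (Finset.mem_range.mp hi)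
    _ = dS p n - eS p n := hrw.symm

private lemma aux_sum_rowLen {μ : YoungDiagram} {n : ℕ} (hn : μ.card = n) :
    ∑ i ∈ Finset.range n, μ.rowLen i = n := by
  have hcell : ∀ c ∈ μ.cells, c.1 ∈ Finset.range n := by
    intro c hc
    rw [Finset.mem_range]
    have h1 : c.1 < μ.colLen c.2 := by
      rw [← YoungDiagram.mem_iff_lt_colLen]
      simpa using hc
    have h2 : μ.colLen c.2 ≤ μ.colLen 0 := μ.colLen_anti 0 c.2 (Nat.zero_le _)
    have h3 : μ.colLen 0 ≤ n := by
      rw [YoungDiagram.colLen_eq_card, ← hn]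
      exact Finset.card_filter_le _ _
    omega
  have h := Finset.card_eq_sum_card_fiberwise hcell
  rw [YoungDiagram.card] at hn
  calc ∑ i ∈ Finset.range n, μ.rowLen i
      = ∑ b ∈ Finset.range n, (μ.cells.filter fun a => a.1 = b).card := by
        apply Finset.sum_congr rfl
        intro i _
        rw [YoungDiagram.rowLen_eq_card]
        rfl
    _ = μ.cells.card := h.symm
    _ = n := hn

private lemma aux_transpose_card (μ : YoungDiagram) : μ.transpose.card = μ.card := by
  simp [YoungDiagram.card, YoungDiagram.transpose]

private lemma aux_sum_colLen {μ : YoungDiagram} {n : ℕ} (hn : μ.card = n) :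
    ∑ j ∈ Finset.range n, μ.colLen j = n := by
  have h : μ.transpose.card = n := by rw [aux_transpose_card, hn]
  have := aux_sum_rowLen h
  simpa [YoungDiagram.rowLen_transpose] using this

private lemma aux_col0 {μ : YoungDiagram} {j : ℕ} (hj : μ.rowLen 0 ≤ j) : μ.colLen j = 0 := by
  by_contra h
  have h1 : 0 < μ.colLen j := Nat.pos_of_ne_zero h
  have h2 : (0, j) ∈ μ := YoungDiagram.mem_iff_lt_colLen.mpr h1
  have := YoungDiagram.mem_iff_lt_rowLen.mp h2
  omega

private lemma aux_col1 {μ : YoungDiagram} {j : ℕ} (hj : j < μ.rowLen 0) : 1 ≤ μ.colLen j :=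
  YoungDiagram.mem_iff_lt_colLen.mp (YoungDiagram.mem_iff_lt_rowLen.mpr hj)

private lemma aux_key {μ : YoungDiagram} {n : ℕ} (hn : μ.card = n) (hmn : μ.rowLen 0 ≤ n) :
    ∀ t : ℕ, ∑ j ∈ Finset.range t, μ.colLen j + μ.rowLen 0 ≤ n + t := by
  intro t
  have hsum : ∑ j ∈ Finset.range n, μ.colLen j = n := aux_sum_colLen hn
  have hsub : ∑ j ∈ Finset.range (μ.rowLen 0), μ.colLen j ≤ n := by
    rw [← hsum]
    exact Finset.sum_le_sum_of_subset (Finset.range_subset_range.mpr hmn)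
  rcases le_or_gt t (μ.rowLen 0) with ht | ht
  · have hsplit : ∑ j ∈ Finset.range (μ.rowLen 0), μ.colLen j =
        ∑ j ∈ Finset.range t, μ.colLen j + ∑ j ∈ Finset.Ico t (μ.rowLen 0), μ.colLen j := by
      simp only [Finset.range_eq_Ico]
      exact (Finset.sum_Ico_consecutive _ (Nat.zero_le t) ht).symm
    have hcard : μ.rowLen 0 - t ≤ ∑ j ∈ Finset.Ico t (μ.rowLen 0), μ.colLen j := by
      calc μ.rowLen 0 - t = ∑ _j ∈ Finset.Ico t (μ.rowLen 0), 1 := by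
            rw [Finset.sum_const, Nat.card_Ico, smul_eq_mul, mul_one]
        _ ≤ _ := Finset.sum_le_sum (fun j hj => aux_col1 (Finset.mem_Ico.mp hj).2)
    omega
  · have hzero : ∑ j ∈ Finset.Ico (μ.rowLen 0) t, μ.colLen j = 0 :=
      Finset.sum_eq_zero (fun j hj => aux_col0 (Finset.mem_Ico.mp hj).1)
    have hsplit : ∑ j ∈ Finset.range t, μ.colLen j =
        ∑ j ∈ Finset.range (μ.rowLen 0), μ.colLen j +
          ∑ j ∈ Finset.Ico (μ.rowLen 0) t, μ.colLen j := by
      simp only [Finset.range_eq_Ico]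
      exact (Finset.sum_Ico_consecutive _ (Nat.zero_le _) ht.le).symm
    omega

private lemma aux_cup {μ : YoungDiagram} {n : ℕ} (hn : μ.card = n) (h10 : 10 ≤ n)
    (hmn : μ.rowLen 0 ≤ n) :
    cS μ.colLen n ≤ ((n:ℝ) - μ.rowLen 0) / ((n:ℝ) - 1) := by
  have hN10 : (10:ℝ) ≤ (n:ℝ) := by exact_mod_cast h10
  have hD2 : (0:ℝ) < (n:ℝ) * ((n:ℝ) - 1) := mul_pos (by linarith) (by linarith)
  have hInner : ∀ i : ℕ, ∑ j ∈ Finset.range (i+1), ((μ.colLen j : ℝ) - 1) ≤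
      (n:ℝ) - μ.rowLen 0 := by
    intro i
    have hk := aux_key hn hmn (i+1)
    have hcast : ∑ j ∈ Finset.range (i+1), ((μ.colLen j : ℝ) - 1) =
        (∑ j ∈ Finset.range (i+1), (μ.colLen j : ℝ)) - ((i:ℝ)+1) := by
      rw [Finset.sum_sub_distrib, Finset.sum_const, Finset.card_range, nsmul_eq_mul, mul_one]
      push_cast
      ring
    rw [hcast]
    have hkr := (Nat.cast_le (α := ℝ)).mpr hk
    push_cast at hkr
    linarith
  have hsumc : ∑ j ∈ Finset.range n, (μ.colLen j : ℝ) = (n:ℝ) := by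
    exact_mod_cast congrArg (Nat.cast (R := ℝ)) (aux_sum_colLen hn)
  calc cS μ.colLen n
      ≤ ∑ i ∈ Finset.range n, (μ.colLen i : ℝ) *
          (((n:ℝ) - μ.rowLen 0) / ((n:ℝ) * ((n:ℝ) - 1))) := by
        rw [cS]
        apply Finset.sum_le_sum
        intro i _
        have hfac : ∑ j ∈ Finset.range (i+1),
            (μ.colLen i : ℝ) * ((μ.colLen j : ℝ) - 1) / ((n:ℝ) * ((n:ℝ) - 1)) =
            (μ.colLen i : ℝ) * (∑ j ∈ Finset.range (i+1), ((μ.colLen j : ℝ) - 1)) /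
              ((n:ℝ) * ((n:ℝ) - 1)) := by
          rw [← Finset.sum_div, ← Finset.mul_sum]
        rw [hfac, mul_div_assoc]
        gcongr
        exact hInner i
      _ = (∑ i ∈ Finset.range n, (μ.colLen i : ℝ)) *
          (((n:ℝ) - μ.rowLen 0) / ((n:ℝ) * ((n:ℝ) - 1))) := by rw [← Finset.sum_mul]
      _ = ((n:ℝ) - μ.rowLen 0) / ((n:ℝ) - 1) := by
          rw [hsumc]
          have h1 : (n:ℝ) ≠ 0 := by linarith
          have h2 : (n:ℝ) - 1 ≠ 0 := by linarith
          field_simp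

private lemma aux_clo {μ : YoungDiagram} {n : ℕ} (hn : μ.card = n) (h10 : 10 ≤ n)
    (hmn : μ.rowLen 0 ≤ n) (hm2 : n + 1 ≤ 2 * μ.rowLen 0) :
    (μ.rowLen 0 : ℝ) * ((n:ℝ) - μ.rowLen 0) / (2 * ((n:ℝ) * ((n:ℝ) - 1))) ≤ cS μ.colLen n := by
  have hN10 : (10:ℝ) ≤ (n:ℝ) := by exact_mod_cast h10
  have hMR : (μ.rowLen 0 : ℝ) ≤ (n:ℝ) := by exact_mod_cast hmn
  have hD2 : (0:ℝ) < (n:ℝ) * ((n:ℝ) - 1) := mul_pos (by linarith) (by linarith)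
  have hm2R : (n:ℝ) + 1 ≤ 2 * (μ.rowLen 0 : ℝ) := by exact_mod_cast hm2
  set m : ℕ := μ.rowLen 0 with hm
  -- sum of colLen over range m is n
  have hms : ∑ j ∈ Finset.range m, μ.colLen j = n := by
    have hsum : ∑ j ∈ Finset.range n, μ.colLen j = n := aux_sum_colLen hn
    have hzero : ∑ j ∈ Finset.Ico m n, μ.colLen j = 0 :=
      Finset.sum_eq_zero (fun j hj => aux_col0 (Finset.mem_Ico.mp hj).1)
    have hsplit : ∑ j ∈ Finset.range n, μ.colLen j =
        ∑ j ∈ Finset.range m, μ.colLen j + ∑ j ∈ Finset.Ico m n, μ.colLen j := by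
      simp only [Finset.range_eq_Ico]
      exact (Finset.sum_Ico_consecutive _ (Nat.zero_le _) hmn).symm
    omega
  -- inner partial sums are at least min(i+1, n-m)
  have greal : ∀ i : ℕ, i < m →
      min ((i:ℝ)+1) ((n:ℝ) - m) ≤ ∑ j ∈ Finset.range (i+1), ((μ.colLen j : ℝ) - 1) := by
    intro i hi
    by_cases hall : ∀ j, j ≤ i → 2 ≤ μ.colLen j
    · have hterm : ∀ j ∈ Finset.range (i+1), (1:ℝ) ≤ (μ.colLen j : ℝ) - 1 := by
        intro j hj
        have h2 : 2 ≤ μ.colLen j := hall j (by have := Finset.mem_range.mp hj; omega)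
        have : (2:ℝ) ≤ (μ.colLen j : ℝ) := by exact_mod_cast h2
        linarith
      calc min ((i:ℝ)+1) ((n:ℝ) - m) ≤ (i:ℝ)+1 := min_le_left _ _
        _ = ∑ _j ∈ Finset.range (i+1), (1:ℝ) := by
            rw [Finset.sum_const, Finset.card_range, nsmul_eq_mul, mul_one]
            push_cast
            ring
        _ ≤ _ := Finset.sum_le_sum hterm
    · push_neg at hall
      obtain ⟨j0, hj0i, hj0⟩ := hall
      have hflat : ∀ j, i+1 ≤ j → j < m → μ.colLen j = 1 := by
        intro j hj1 hj2
        have hle : μ.colLen j ≤ μ.colLen j0 := μ.colLen_anti j0 j (by omega)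
        have hge : 1 ≤ μ.colLen j := aux_col1 hj2
        omega
      have hsplit : ∑ j ∈ Finset.range m, ((μ.colLen j : ℝ) - 1) =
          ∑ j ∈ Finset.range (i+1), ((μ.colLen j : ℝ) - 1) +
            ∑ j ∈ Finset.Ico (i+1) m, ((μ.colLen j : ℝ) - 1) := by
        simp only [Finset.range_eq_Ico]
        exact (Finset.sum_Ico_consecutive _ (Nat.zero_le _) (by omega)).symm
      have hzero : ∑ j ∈ Finset.Ico (i+1) m, ((μ.colLen j : ℝ) - 1) = 0 := by
        apply Finset.sum_eq_zero
        intro j hj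
        have := hflat j (Finset.mem_Ico.mp hj).1 (Finset.mem_Ico.mp hj).2
        rw [this]
        norm_num
      have hfull : ∑ j ∈ Finset.range m, ((μ.colLen j : ℝ) - 1) = (n:ℝ) - m := by
        rw [Finset.sum_sub_distrib, Finset.sum_const, Finset.card_range, nsmul_eq_mul, mul_one]
        have : ∑ j ∈ Finset.range m, (μ.colLen j : ℝ) = (n:ℝ) := by
          exact_mod_cast congrArg (Nat.cast (R := ℝ)) hms
        rw [this]
      have : ∑ j ∈ Finset.range (i+1), ((μ.colLen j : ℝ) - 1) = (n:ℝ) - m := by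
        rw [hsplit, hzero] at hfull
        linarith
      rw [this]
      exact min_le_right _ _
  -- pairing bound for the sum of mins
  have hminsum : (m:ℝ) * ((n:ℝ) - m) / 2 ≤
      ∑ i ∈ Finset.range m, min ((i:ℝ)+1) ((n:ℝ) - m) := by
    have hrefl := Finset.sum_range_reflect (fun i => min ((i:ℝ)+1) ((n:ℝ) - m)) m
    have hpair : ∀ i ∈ Finset.range m,
        (n:ℝ) - m ≤ min ((i:ℝ)+1) ((n:ℝ) - m) + min (((m-1-i : ℕ):ℝ)+1) ((n:ℝ) - m) := by
      intro i hi
      have him := Finset.mem_range.mp hi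
      have hc : ((m-1-i : ℕ):ℝ) = (m:ℝ) - 1 - i := by
        have h1 : m - 1 - i = m - (i+1) := by omega
        rw [h1, Nat.cast_sub (by omega)]
        push_cast
        ring
      rw [hc]
      have hi0 : (0:ℝ) ≤ (i:ℝ) := by positivity
      rcases le_total ((i:ℝ)+1) ((n:ℝ) - m) with h | h
      · rw [min_eq_left h]
        have : (n:ℝ) - m - ((i:ℝ)+1) ≤ min ((m:ℝ) - 1 - i + 1) ((n:ℝ) - m) :=
          le_min (by linarith) (by linarith)
        linarith
      · rw [min_eq_right h]
        have : (0:ℝ) ≤ min ((m:ℝ) - 1 - i + 1) ((n:ℝ) - m) :=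
          le_min (by push_cast at him ⊢; linarith) (by linarith)
        linarith
    have hsum2 : ∑ _i ∈ Finset.range m, ((n:ℝ) - m) ≤
        ∑ i ∈ Finset.range m, (min ((i:ℝ)+1) ((n:ℝ) - m) +
          min (((m-1-i : ℕ):ℝ)+1) ((n:ℝ) - m)) := Finset.sum_le_sum hpair
    rw [Finset.sum_add_distrib, hrefl, Finset.sum_const, Finset.card_range, nsmul_eq_mul] at hsum2
    linarith
  -- terms of cS are nonnegative
  have hT2a : ∀ i j : ℕ, j ≤ i → 0 ≤ (μ.colLen i : ℝ) * ((μ.colLen j : ℝ) - 1) := by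
    intro i j hji
    rcases Nat.eq_zero_or_pos (μ.colLen j) with hj | hj
    · have : μ.colLen i = 0 := Nat.le_antisymm (hj ▸ μ.colLen_anti j i hji) (Nat.zero_le _)
      simp [this]
    · have h1 : (1:ℝ) ≤ (μ.colLen j : ℝ) := by exact_mod_cast hj
      have hpi : (0:ℝ) ≤ (μ.colLen i : ℝ) := by positivity
      nlinarith
  calc (m:ℝ) * ((n:ℝ) - m) / (2 * ((n:ℝ) * ((n:ℝ) - 1)))
      = ((m:ℝ) * ((n:ℝ) - m) / 2) / ((n:ℝ) * ((n:ℝ) - 1)) := (div_div _ _ _).symm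
    _ ≤ (∑ i ∈ Finset.range m, min ((i:ℝ)+1) ((n:ℝ) - m)) / ((n:ℝ) * ((n:ℝ) - 1)) := by
        gcongr
    _ = ∑ i ∈ Finset.range m, min ((i:ℝ)+1) ((n:ℝ) - m) / ((n:ℝ) * ((n:ℝ) - 1)) :=
        Finset.sum_div _ _ _
    _ ≤ ∑ i ∈ Finset.range m, ∑ j ∈ Finset.range (i+1),
          (μ.colLen i : ℝ) * ((μ.colLen j : ℝ) - 1) / ((n:ℝ) * ((n:ℝ) - 1)) := by
        apply Finset.sum_le_sum
        intro i hi
        have him := Finset.mem_range.mp hi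
        have hfac : ∑ j ∈ Finset.range (i+1),
            (μ.colLen i : ℝ) * ((μ.colLen j : ℝ) - 1) / ((n:ℝ) * ((n:ℝ) - 1)) =
            (μ.colLen i : ℝ) * (∑ j ∈ Finset.range (i+1), ((μ.colLen j : ℝ) - 1)) /
              ((n:ℝ) * ((n:ℝ) - 1)) := by
          rw [← Finset.sum_div, ← Finset.mul_sum]
        rw [hfac]
        have hg := greal i him
        have hmin0 : (0:ℝ) ≤ min ((i:ℝ)+1) ((n:ℝ) - m) := le_min (by positivity) (by linarith)
        have hai : (1:ℝ) ≤ (μ.colLen i : ℝ) := by exact_mod_cast aux_col1 him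
        have hgi : min ((i:ℝ)+1) ((n:ℝ) - m) ≤
            (μ.colLen i : ℝ) * (∑ j ∈ Finset.range (i+1), ((μ.colLen j : ℝ) - 1)) := by
          calc min ((i:ℝ)+1) ((n:ℝ) - m) ≤ ∑ j ∈ Finset.range (i+1), ((μ.colLen j : ℝ) - 1) := hg
            _ ≤ (μ.colLen i : ℝ) * (∑ j ∈ Finset.range (i+1), ((μ.colLen j : ℝ) - 1)) :=
                le_mul_of_one_le_left (by linarith) hai
        exact div_le_div_of_nonneg_right hgi hD2.le
    _ ≤ cS μ.colLen n := by
        rw [cS]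
        apply Finset.sum_le_sum_of_subset_of_nonneg (Finset.range_subset_range.mpr hmn)
        intro i _ _
        apply Finset.sum_nonneg
        intro j hj
        exact div_nonneg (hT2a i j (by have := Finset.mem_range.mp hj; omega)) hD2.le

private lemma aux_core (n m r : ℝ) (h10 : 10 ≤ n) (hm : n + 1 ≤ 2*m) (hmn : m + 1 ≤ n)
    (hr : r = n - m) (hcon : 10*m*r < n*(n-1)) :
    n*(n-1)*(n-2)*(n-3) - 10*m*r*(n-2)*(n-3) ≤ (m-1)*(m-2)*n*(n-1) := by
  subst hr
  nlinarith [mul_nonneg (mul_nonneg (sub_nonneg.2 (by linarith : m + 1 ≤ n))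
    (by nlinarith : (0:ℝ) ≤ 9*m - n)) (mul_nonneg (by linarith : (0:ℝ) ≤ n)
    (by linarith : (0:ℝ) ≤ n)), sq_nonneg (n-m), sq_nonneg n,
    mul_pos (by linarith : (0:ℝ) < n) (by linarith : (0:ℝ) < n - m)]

set_option maxHeartbeats 1000000 in
/-- For a partition `λ` of `n ≥ 10` with `q = λ₁/n > 1/2`:
`c_{λ'} − d_λ + e_λ ≤ 20·c_{λ'}²`. -/
theorem c_sub_d_add_e_bound (μ : YoungDiagram) (n : ℕ) (hn : μ.card = n) (h10 : 10 ≤ n)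
    (q : ℝ) (hq : q = (μ.rowLen 0 : ℝ) / n) (hq2 : 1 / 2 < q) :
    cS μ.colLen n - dS μ.rowLen n + eS μ.rowLen n ≤ 20 * (cS μ.colLen n) ^ 2 := by
  have hN10 : (10:ℝ) ≤ (n:ℝ) := by exact_mod_cast h10
  have hNpos : (0:ℝ) < (n:ℝ) := by linarith
  have hm2 : n + 1 ≤ 2 * μ.rowLen 0 := by
    have h1 : (1:ℝ)/2 < (μ.rowLen 0 : ℝ)/n := hq ▸ hq2
    rw [div_lt_div_iff₀ (by norm_num) hNpos] at h1
    have h2 : n < 2 * μ.rowLen 0 := by exact_mod_cast (by linarith : (n:ℝ) < 2 * μ.rowLen 0)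
    omega
  have hmn : μ.rowLen 0 ≤ n := by
    have hsum := aux_sum_rowLen hn
    have h0 : 0 ∈ Finset.range n := Finset.mem_range.mpr (by omega)
    calc μ.rowLen 0 ≤ ∑ i ∈ Finset.range n, μ.rowLen i :=
          Finset.single_le_sum (fun i _ => Nat.zero_le _) h0
      _ = n := hsum
  have hm6 : 6 ≤ μ.rowLen 0 := by omega
  have hanti : ∀ x y : ℕ, x ≤ y → μ.rowLen y ≤ μ.rowLen x := fun x y h => μ.rowLen_anti x y h
  have hde := aux_de hanti (aux_sum_rowLen hn) h10 hm6 hmn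
  have hcup := aux_cup hn h10 hmn
  have hclo := aux_clo hn h10 hmn hm2
  have hMR : (μ.rowLen 0 : ℝ) ≤ (n:ℝ) := by exact_mod_cast hmn
  have hM6 : (6:ℝ) ≤ (μ.rowLen 0 : ℝ) := by exact_mod_cast hm6
  have hm2R : (n:ℝ) + 1 ≤ 2 * (μ.rowLen 0 : ℝ) := by exact_mod_cast hm2
  have hDK : (0:ℝ) < ((n:ℝ) - 1) * ((n:ℝ) - 2) * ((n:ℝ) - 3) :=
    mul_pos (mul_pos (by linarith) (by linarith)) (by linarith)
  have hKnn : (0:ℝ) ≤ ((n:ℝ) - μ.rowLen 0) * ((μ.rowLen 0 : ℝ) - 1) * ((μ.rowLen 0 : ℝ) - 2) /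
      (((n:ℝ) - 1) * ((n:ℝ) - 2) * ((n:ℝ) - 3)) :=
    div_nonneg (mul_nonneg (mul_nonneg (by linarith) (by linarith)) (by linarith)) hDK.le
  have hclonn : (0:ℝ) ≤ (μ.rowLen 0 : ℝ) * ((n:ℝ) - μ.rowLen 0) / (2 * ((n:ℝ) * ((n:ℝ) - 1))) :=
    div_nonneg (mul_nonneg (by linarith) (by linarith))
      (by nlinarith)
  have hc0 : (0:ℝ) ≤ cS μ.colLen n := le_trans hclonn hclo
  rcases eq_or_lt_of_le hmn with hr0 | hr1
  · -- m = n : single-row case, c ≤ 0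
    have hp1 : μ.rowLen 1 = 0 := by
      have hsum := aux_sum_rowLen hn
      have hsub : ∑ i ∈ Finset.range 2, μ.rowLen i ≤ ∑ i ∈ Finset.range n, μ.rowLen i :=
        Finset.sum_le_sum_of_subset (Finset.range_subset_range.mpr (by omega))
      rw [Finset.sum_range_succ, Finset.sum_range_one, hsum] at hsub
      omega
    have hcol : ∀ j, μ.colLen j ≤ 1 := by
      intro j
      by_contra h
      push_neg at h
      have h2 : (1, j) ∈ μ := YoungDiagram.mem_iff_lt_colLen.mpr (by omega)
      have := YoungDiagram.mem_iff_lt_rowLen.mp h2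
      omega
    have hcneg : cS μ.colLen n ≤ 0 := by
      rw [cS]
      apply Finset.sum_nonpos
      intro i _
      apply Finset.sum_nonpos
      intro j _
      apply div_nonpos_of_nonpos_of_nonneg _ (by nlinarith)
      have h1 : (0:ℝ) ≤ (μ.colLen i : ℝ) := by positivity
      have h2 : (μ.colLen j : ℝ) - 1 ≤ 0 := by
        have := hcol j
        have : (μ.colLen j : ℝ) ≤ 1 := by exact_mod_cast this
        linarith
      exact mul_nonpos_iff.mpr (Or.inl ⟨h1, h2⟩)
    nlinarith [sq_nonneg (cS μ.colLen n)]
  · -- m < n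
    have hmn1 : (μ.rowLen 0 : ℝ) + 1 ≤ (n:ℝ) := by exact_mod_cast hr1
    have h1 : cS μ.colLen n - 20 * (cS μ.colLen n)^2 ≤
        cS μ.colLen n * (1 - 20 * ((μ.rowLen 0 : ℝ) * ((n:ℝ) - μ.rowLen 0) /
          (2 * ((n:ℝ) * ((n:ℝ) - 1))))) := by
      nlinarith [mul_le_mul_of_nonneg_left hclo hc0]
    rcases le_or_gt (1 - 20 * ((μ.rowLen 0 : ℝ) * ((n:ℝ) - μ.rowLen 0) /
        (2 * ((n:ℝ) * ((n:ℝ) - 1))))) 0 with hb | hb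
    · have h2 : cS μ.colLen n * (1 - 20 * ((μ.rowLen 0 : ℝ) * ((n:ℝ) - μ.rowLen 0) /
          (2 * ((n:ℝ) * ((n:ℝ) - 1))))) ≤ 0 := mul_nonpos_iff.mpr (Or.inl ⟨hc0, hb⟩)
      linarith
    · have hcon : 10 * (μ.rowLen 0 : ℝ) * ((n:ℝ) - μ.rowLen 0) < (n:ℝ) * ((n:ℝ) - 1) := by
        have h2 : (μ.rowLen 0 : ℝ) * ((n:ℝ) - μ.rowLen 0) / (2 * ((n:ℝ) * ((n:ℝ) - 1))) <
            1/20 := by linarith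
        rw [div_lt_div_iff₀ (by nlinarith) (by norm_num)] at h2
        linarith
      have core := aux_core (n:ℝ) (μ.rowLen 0 : ℝ) ((n:ℝ) - μ.rowLen 0) hN10 hm2R hmn1 rfl hcon
      -- star inequality
      have hexp : ((n:ℝ) - μ.rowLen 0)/((n:ℝ) - 1) * (1 - 20 * ((μ.rowLen 0 : ℝ) *
          ((n:ℝ) - μ.rowLen 0) / (2 * ((n:ℝ) * ((n:ℝ) - 1))))) =
          ((n:ℝ) - μ.rowLen 0) * ((n:ℝ)*((n:ℝ)-1) - 10*(μ.rowLen 0 : ℝ)*((n:ℝ) - μ.rowLen 0)) /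
            (((n:ℝ) - 1) * ((n:ℝ)*((n:ℝ)-1))) := by
        have e1 : (n:ℝ) ≠ 0 := by linarith
        have e2 : (n:ℝ) - 1 ≠ 0 := by linarith
        field_simp
        ring
      have hstar : ((n:ℝ) - μ.rowLen 0)/((n:ℝ) - 1) * (1 - 20 * ((μ.rowLen 0 : ℝ) *
          ((n:ℝ) - μ.rowLen 0) / (2 * ((n:ℝ) * ((n:ℝ) - 1))))) ≤
          ((n:ℝ) - μ.rowLen 0) * ((μ.rowLen 0 : ℝ) - 1) * ((μ.rowLen 0 : ℝ) - 2) /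
            (((n:ℝ) - 1) * ((n:ℝ) - 2) * ((n:ℝ) - 3)) := by
        rw [hexp, div_le_div_iff₀ (by nlinarith) hDK]
        calc ((n:ℝ) - μ.rowLen 0) * ((n:ℝ)*((n:ℝ)-1) - 10*(μ.rowLen 0 : ℝ)*((n:ℝ) - μ.rowLen 0)) *
              (((n:ℝ) - 1) * ((n:ℝ) - 2) * ((n:ℝ) - 3))
            = (((n:ℝ) - μ.rowLen 0) * ((n:ℝ) - 1)) *
              ((n:ℝ)*((n:ℝ)-1)*((n:ℝ)-2)*((n:ℝ)-3) -
                10*(μ.rowLen 0 : ℝ)*((n:ℝ) - μ.rowLen 0)*((n:ℝ)-2)*((n:ℝ)-3)) := by ring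
          _ ≤ (((n:ℝ) - μ.rowLen 0) * ((n:ℝ) - 1)) *
              (((μ.rowLen 0 : ℝ)-1)*((μ.rowLen 0 : ℝ)-2)*(n:ℝ)*((n:ℝ)-1)) := by
              apply mul_le_mul_of_nonneg_left core
              exact mul_nonneg (by linarith) (by linarith)
          _ = ((n:ℝ) - μ.rowLen 0) * ((μ.rowLen 0 : ℝ) - 1) * ((μ.rowLen 0 : ℝ) - 2) *
              (((n:ℝ) - 1) * ((n:ℝ) * ((n:ℝ) - 1))) := by ring
      have h3 : cS μ.colLen n * (1 - 20 * ((μ.rowLen 0 : ℝ) * ((n:ℝ) - μ.rowLen 0) /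
          (2 * ((n:ℝ) * ((n:ℝ) - 1))))) ≤
          ((n:ℝ) - μ.rowLen 0)/((n:ℝ) - 1) * (1 - 20 * ((μ.rowLen 0 : ℝ) *
          ((n:ℝ) - μ.rowLen 0) / (2 * ((n:ℝ) * ((n:ℝ) - 1))))) :=
        mul_le_mul_of_nonneg_right hcup hb.le
      linarith
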